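/- Let A be an n×n matrix over ℍ with n ≥ 2. For every i ∈ {1,…,n}, rdet_i A = Σ_{j=1}^{n} a_{ij}·R_{ij}, where the right ij-th cofactor is R_{ij} = −rdet_j (A_{.j}(a_{.i}))^{ii} for j ≠ i (replace the j-th column of A by the i-th column of A, then delete the i-th row and the i-th column, and take the j-th row determinant with the row indexing inherited from A), and R_{ii} = rdet_k A^{ii}, where k = min({1,…,n}∖{i}) and A^{ii} is the submatrix of A obtained by deleting its i-th row and i-th column. -/

import Mathlib

open Quaternion Matrix Finset

noncomputable section

/-- Ordered product of the entries of `A` along the cycle of `σ` containing `x`,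
starting at `x`:  `a_{x,σx} · a_{σx,σ²x} ⋯ a_{σ^{c-1}x,x}`. -/
def cycProd {n : ℕ} (A : Matrix (Fin n) (Fin n) ℍ[ℝ]) (σ : Equiv.Perm (Fin n))
    (x : Fin n) : ℍ[ℝ] :=
  ((List.range (Function.minimalPeriod (⇑σ) x)).map
    (fun t => A ((⇑σ)^[t] x) ((⇑σ)^[t + 1] x))).prod

/-- `x` is the smallest element of its `σ`-cycle. -/
def isLeaderB {n : ℕ} (σ : Equiv.Perm (Fin n)) (x : Fin n) : Bool :=
  (List.range n).all fun t => decide (x ≤ (⇑σ)^[t] x)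

/-- `x` lies in the `σ`-cycle of `i`. -/
def inCycleB {n : ℕ} (σ : Equiv.Perm (Fin n)) (i x : Fin n) : Bool :=
  (List.range n).any fun t => decide ((⇑σ)^[t] i = x)

/-- The increasing list of the smallest elements of the `σ`-cycles other than
the cycle of `i`. -/
def leaders {n : ℕ} (σ : Equiv.Perm (Fin n)) (i : Fin n) : List (Fin n) :=
  (List.finRange n).filter fun x => isLeaderB σ x && !(inCycleB σ i x)

/-- The `i`-th row determinant of a quaternion matrix: the sum over all
permutations, written in left-ordered cycle notation (the cycle of `i` first,
starting with `i`; every other cycle starting with its smallest element, these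
smallest elements increasing from left to right), of the sign times the ordered
product of the corresponding entries. -/
def rdet {n : ℕ} (A : Matrix (Fin n) (Fin n) ℍ[ℝ]) (i : Fin n) : ℍ[ℝ] :=
  ∑ σ : Equiv.Perm (Fin n),
    ((Equiv.Perm.sign σ : ℤ) : ℍ[ℝ]) *
      (cycProd A σ i * ((leaders σ i).map (cycProd A σ)).prod)

/-- The `j`-th column determinant of a quaternion matrix: the sum over all
permutations, written in right-ordered cycle notation (the cycle of `j` last,
ending with `j`; every other cycle ending with its smallest element, these
smallest elements increasing from right to left), of the sign times the ordered
product of the corresponding entries. -/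
def cdet {n : ℕ} (A : Matrix (Fin n) (Fin n) ℍ[ℝ]) (j : Fin n) : ℍ[ℝ] :=
  ∑ τ : Equiv.Perm (Fin n),
    ((Equiv.Perm.sign τ : ℤ) : ℍ[ℝ]) *
      ((((leaders τ j).reverse).map (cycProd A τ)).prod * cycProd A τ j)

/-- The determinant of a (Hermitian) quaternion matrix: the common value of all
row and column determinants. -/
def Hdet : {m : ℕ} → Matrix (Fin m) (Fin m) ℍ[ℝ] → ℍ[ℝ]
  | 0, _ => 1
  | _ + 1, A => rdet A 0

/-- The principal submatrix of `M` with rows and columns indexed by `β`. -/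
def principalSub {n : ℕ} (M : Matrix (Fin n) (Fin n) ℍ[ℝ]) (β : Finset (Fin n)) :
    Matrix (Fin β.card) (Fin β.card) ℍ[ℝ] :=
  M.submatrix (⇑(β.orderEmbOfFin rfl)) (⇑(β.orderEmbOfFin rfl))

/-- The position of `i` inside the increasing enumeration of the finset `β`. -/
def posIn {n : ℕ} (β : Finset (Fin n)) {i : Fin n} (h : i ∈ β) : Fin β.card :=
  (β.orderIsoOfFin rfl).symm ⟨i, h⟩

/-- `Σ_{β ∈ J_{s,n}{i}} cdet_i (M_β^β)`: the sum, over all subsets `β` of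
cardinality `s` containing `i`, of the column determinants of the principal
submatrix `M_β^β` taken at the position of `i` within `β`. -/
def cdetPM {n : ℕ} (M : Matrix (Fin n) (Fin n) ℍ[ℝ]) (s : ℕ) (i : Fin n) : ℍ[ℝ] :=
  ∑ β ∈ ((Finset.powersetCard s (Finset.univ : Finset (Fin n))).filter
      fun β => i ∈ β).attach,
    cdet (principalSub M β.1) (posIn β.1 (Finset.mem_filter.mp β.2).2)

/-- `Σ_{α ∈ I_{s,n}{j}} rdet_j (M_α^α)`: the sum, over all subsets `α` of
cardinality `s` containing `j`, of the row determinants of the principal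
submatrix `M_α^α` taken at the position of `j` within `α`. -/
def rdetPM {n : ℕ} (M : Matrix (Fin n) (Fin n) ℍ[ℝ]) (s : ℕ) (j : Fin n) : ℍ[ℝ] :=
  ∑ α ∈ ((Finset.powersetCard s (Finset.univ : Finset (Fin n))).filter
      fun α => j ∈ α).attach,
    rdet (principalSub M α.1) (posIn α.1 (Finset.mem_filter.mp α.2).2)

/-- The sum of all principal minors of `M` of order `r`. -/
def minorSum {n : ℕ} (M : Matrix (Fin n) (Fin n) ℍ[ℝ]) (r : ℕ) : ℍ[ℝ] :=
  ∑ β ∈ Finset.powersetCard r (Finset.univ : Finset (Fin n)),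
    Hdet (principalSub M β)

/-- The (column) rank of a quaternion matrix: the dimension of the span of its
columns as a right `ℍ`-vector space. -/
def qrank {m n : ℕ} (A : Matrix (Fin m) (Fin n) ℍ[ℝ]) : ℕ :=
  Module.finrank ℍ[ℝ]ᵐᵒᵖ
    (Submodule.span ℍ[ℝ]ᵐᵒᵖ (Set.range Aᵀ) : Submodule ℍ[ℝ]ᵐᵒᵖ (Fin m → ℍ[ℝ]))

/-- `Ind A = k`: `k` is the smallest nonnegative integer with
`rank A^(k+1) = rank A^k`. -/
def isInd {n : ℕ} (A : Matrix (Fin n) (Fin n) ℍ[ℝ]) (k : ℕ) : Prop :=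
  qrank (A ^ (k + 1)) = qrank (A ^ k) ∧
    ∀ l < k, qrank (A ^ (l + 1)) ≠ qrank (A ^ l)

/-- `X` is a Drazin inverse of `A` (relative to the index `k`). -/
def isDrazin {n : ℕ} (A X : Matrix (Fin n) (Fin n) ℍ[ℝ]) (k : ℕ) : Prop :=
  A ^ (k + 1) * X = A ^ k ∧ X * A * X = X ∧ A * X = X * A

end

section helpers
open Equiv Function

variable {m m' : ℕ}

lemma perm_minPos (σ : Equiv.Perm (Fin m)) (x : Fin m) : 0 < minimalPeriod (⇑σ) x := by
  have h : IsPeriodicPt (⇑σ) (orderOf σ) x := by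
    rw [IsPeriodicPt, IsFixedPt, Equiv.Perm.iterate_eq_pow, pow_orderOf_eq_one]; rfl
  exact h.minimalPeriod_pos (orderOf_pos σ)

lemma perm_minLe (σ : Equiv.Perm (Fin m)) (x : Fin m) : minimalPeriod (⇑σ) x ≤ m := by
  have hinj : Set.InjOn (fun t => (⇑σ)^[t] x) (Set.Iio (minimalPeriod (⇑σ) x)) :=
    iterate_injOn_Iio_minimalPeriod
  classical
  have : (Finset.range (minimalPeriod (⇑σ) x)).card ≤ (Finset.univ : Finset (Fin m)).card := by
    apply Finset.card_le_card_of_injOn (fun t => (⇑σ)^[t] x)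
    · intro t _; exact Finset.mem_univ _
    · intro a ha b hb hab
      exact hinj (by simpa using ha) (by simpa using hb) hab
  simpa using this

lemma sameCycle_iff_iter (σ : Equiv.Perm (Fin m)) (x y : Fin m) :
    σ.SameCycle x y ↔ ∃ t : ℕ, (⇑σ)^[t] x = y := by
  constructor
  · intro h
    obtain ⟨t, _, ht⟩ := h.exists_pow_eq'
    exact ⟨t, by simpa [Equiv.Perm.iterate_eq_pow] using ht⟩
  · rintro ⟨t, ht⟩
    exact ⟨(t : ℤ), by simpa [Equiv.Perm.iterate_eq_pow, zpow_natCast] using ht⟩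

lemma exists_iter_bounded (σ : Equiv.Perm (Fin m)) (x : Fin m) (P : Fin m → Prop) :
    (∃ t, t < m ∧ P ((⇑σ)^[t] x)) ↔ ∃ t : ℕ, P ((⇑σ)^[t] x) := by
  constructor
  · rintro ⟨t, _, ht⟩; exact ⟨t, ht⟩
  · rintro ⟨t, ht⟩
    refine ⟨t % minimalPeriod (⇑σ) x, ?_, ?_⟩
    · exact lt_of_lt_of_le (Nat.mod_lt _ (perm_minPos σ x)) (perm_minLe σ x)
    · rwa [iterate_mod_minimalPeriod_eq]

lemma forall_iter_bounded (σ : Equiv.Perm (Fin m)) (x : Fin m) (P : Fin m → Prop) :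
    (∀ t, t < m → P ((⇑σ)^[t] x)) ↔ ∀ t : ℕ, P ((⇑σ)^[t] x) := by
  constructor
  · intro h t
    rw [← iterate_mod_minimalPeriod_eq]
    exact h _ (lt_of_lt_of_le (Nat.mod_lt _ (perm_minPos σ x)) (perm_minLe σ x))
  · intro h t _; exact h t

lemma inCycleB_iff (σ : Equiv.Perm (Fin m)) (i x : Fin m) :
    inCycleB σ i x = true ↔ σ.SameCycle i x := by
  rw [sameCycle_iff_iter]
  unfold inCycleB
  simp only [List.any_eq_true, List.mem_range, decide_eq_true_eq]
  exact exists_iter_bounded σ i (fun y => y = x)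

lemma isLeaderB_iff (σ : Equiv.Perm (Fin m)) (x : Fin m) :
    isLeaderB σ x = true ↔ ∀ t : ℕ, x ≤ (⇑σ)^[t] x := by
  unfold isLeaderB
  simp only [List.all_eq_true, List.mem_range, decide_eq_true_eq]
  exact forall_iter_bounded σ x (fun y => x ≤ y)

lemma mem_leaders_iff (σ : Equiv.Perm (Fin m)) (i y : Fin m) :
    y ∈ leaders σ i ↔ (∀ t : ℕ, y ≤ (⇑σ)^[t] y) ∧ ¬ σ.SameCycle i y := by
  unfold leaders
  simp only [List.mem_filter, List.mem_finRange, true_and, Bool.and_eq_true,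
    Bool.not_eq_true', isLeaderB_iff, Bool.not_eq_true]
  rw [← inCycleB_iff]
  simp

lemma leaders_pairwise (σ : Equiv.Perm (Fin m)) (i : Fin m) :
    (leaders σ i).Pairwise (· < ·) :=
  (List.pairwise_lt_finRange m).filter _

lemma sorted_ext {l₁ l₂ : List (Fin m)} (h₁ : l₁.Pairwise (· < ·))
    (h₂ : l₂.Pairwise (· < ·)) (h : ∀ x, x ∈ l₁ ↔ x ∈ l₂) : l₁ = l₂ := by
  haveI : IsAntisymm (Fin m) (· < ·) := ⟨fun a b h1 h2 => absurd h1 (asymm h2)⟩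
  refine List.Perm.eq_of_pairwise (fun a b _ _ h1 h2 => absurd h1 (asymm h2)) h₁ h₂ ?_
  refine (List.perm_ext_iff_of_nodup ?_ ?_).2 h
  · exact h₁.imp ne_of_lt
  · exact h₂.imp ne_of_lt

lemma iterate_corr {σ : Equiv.Perm (Fin m)} {τ : Equiv.Perm (Fin m')}
    {g : Fin m' → Fin m} {y : Fin m'}
    (h : ∀ t : ℕ, σ (g ((⇑τ)^[t] y)) = g ((⇑τ)^[t + 1] y)) :
    ∀ k : ℕ, (⇑σ)^[k] (g y) = g ((⇑τ)^[k] y) := by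
  intro k
  induction k with
  | zero => rfl
  | succ k ih =>
    rw [Function.iterate_succ_apply', ih, h k]

lemma minimalPeriod_corr {σ : Equiv.Perm (Fin m)} {τ : Equiv.Perm (Fin m')}
    {g : Fin m' → Fin m} (hg : Function.Injective g) {y : Fin m'}
    (hiter : ∀ k : ℕ, (⇑σ)^[k] (g y) = g ((⇑τ)^[k] y)) :
    minimalPeriod (⇑σ) (g y) = minimalPeriod (⇑τ) y := by
  apply le_antisymm
  · have h1 : IsPeriodicPt (⇑σ) (minimalPeriod (⇑τ) y) (g y) := by
      rw [IsPeriodicPt, IsFixedPt, hiter, isPeriodicPt_minimalPeriod (⇑τ) y]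
    exact h1.minimalPeriod_le (perm_minPos τ y)
  · have h2 : IsPeriodicPt (⇑τ) (minimalPeriod (⇑σ) (g y)) y := by
      have := isPeriodicPt_minimalPeriod (⇑σ) (g y)
      rw [IsPeriodicPt, IsFixedPt, hiter] at this
      exact hg this
    exact h2.minimalPeriod_le (perm_minPos σ (g y))

lemma cycProd_corr {A : Matrix (Fin m) (Fin m) ℍ[ℝ]} {B : Matrix (Fin m') (Fin m') ℍ[ℝ]}
    {σ : Equiv.Perm (Fin m)} {τ : Equiv.Perm (Fin m')}
    {g : Fin m' → Fin m} (hg : Function.Injective g) {y : Fin m'}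
    (hiter : ∀ k : ℕ, (⇑σ)^[k] (g y) = g ((⇑τ)^[k] y))
    (hAB : ∀ t : ℕ, A (g ((⇑τ)^[t] y)) (g ((⇑τ)^[t + 1] y)) = B ((⇑τ)^[t] y) ((⇑τ)^[t + 1] y)) :
    cycProd A σ (g y) = cycProd B τ y := by
  unfold cycProd
  rw [minimalPeriod_corr hg hiter]
  congr 1
  apply List.map_congr_left
  intro t _
  rw [hiter, hiter]
  exact hAB t

end helpers

section main
open Equiv Function Matrix

variable {n : ℕ}

def extP (i : Fin (n + 2)) (o : Option (Fin (n + 1))) (τ : Equiv.Perm (Fin (n + 1))) :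
    Equiv.Perm (Fin (n + 2)) :=
  ((finSuccEquiv' i).symm).permCongr (Equiv.swap none o * τ.optionCongr)

lemma extP_apply_self (i : Fin (n + 2)) (o : Option (Fin (n + 1)))
    (τ : Equiv.Perm (Fin (n + 1))) : extP i o τ i = (finSuccEquiv' i).symm o := by
  simp [extP, Equiv.permCongr_apply, finSuccEquiv'_at]

lemma extP_apply_succAbove (i : Fin (n + 2)) (o : Option (Fin (n + 1)))
    (τ : Equiv.Perm (Fin (n + 1))) (y : Fin (n + 1)) :
    extP i o τ (i.succAbove y) = (finSuccEquiv' i).symm (Equiv.swap none o (some (τ y))) := by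
  simp [extP, Equiv.permCongr_apply, finSuccEquiv'_succAbove]

lemma extP_sign (i : Fin (n + 2)) (o : Option (Fin (n + 1)))
    (τ : Equiv.Perm (Fin (n + 1))) :
    Equiv.Perm.sign (extP i o τ) = Equiv.Perm.sign (Equiv.swap (none : Option (Fin (n + 1))) o)
      * Equiv.Perm.sign τ := by
  rw [extP, Equiv.Perm.sign_permCongr, Equiv.Perm.sign_mul, Equiv.optionCongr_sign]

lemma extP_none_fix (i : Fin (n + 2)) (τ : Equiv.Perm (Fin (n + 1))) :
    extP i none τ i = i := by
  rw [extP_apply_self, finSuccEquiv'_symm_none]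

lemma extP_none_succAbove (i : Fin (n + 2)) (τ : Equiv.Perm (Fin (n + 1))) (y : Fin (n + 1)) :
    extP i none τ (i.succAbove y) = i.succAbove (τ y) := by
  rw [extP_apply_succAbove, Equiv.swap_self]
  simp [finSuccEquiv'_symm_some]

lemma caseNone (A : Matrix (Fin (n + 2)) (Fin (n + 2)) ℍ[ℝ]) (i : Fin (n + 2))
    (τ : Equiv.Perm (Fin (n + 1))) :
    ((Equiv.Perm.sign (extP i none τ) : ℤ) : ℍ[ℝ]) *
        (cycProd A (extP i none τ) i *
          ((leaders (extP i none τ) i).map (cycProd A (extP i none τ))).prod) =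
      A i i * (((Equiv.Perm.sign τ : ℤ) : ℍ[ℝ]) *
        (cycProd (A.submatrix i.succAbove i.succAbove) τ 0 *
          ((leaders τ 0).map (cycProd (A.submatrix i.succAbove i.succAbove) τ)).prod)) := by
  set σ := extP i none τ with hσ
  set g := i.succAbove with hg
  set B := A.submatrix i.succAbove i.succAbove with hB
  have hfix : σ i = i := extP_none_fix i τ
  have hcom : ∀ y, σ (g y) = g (τ y) := extP_none_succAbove i τ
  have hiter : ∀ y (k : ℕ), (⇑σ)^[k] (g y) = g ((⇑τ)^[k] y) := by
    intro y
    apply iterate_corr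
    intro t
    rw [Function.iterate_succ_apply', hcom]
  have hginj : Function.Injective g := Fin.succAbove_right_injective
  have hcycY : ∀ y, cycProd A σ (g y) = cycProd B τ y := by
    intro y
    exact cycProd_corr hginj (hiter y) (fun t => rfl)
  have hminI : minimalPeriod (⇑σ) i = 1 := minimalPeriod_eq_one_iff_isFixedPt.2 hfix
  have hcycI : cycProd A σ i = A i i := by
    unfold cycProd
    rw [hminI]
    have h1 : (List.range 1) = [0] := rfl
    rw [h1]
    simp [hfix]
  have hSC : ∀ x, σ.SameCycle i x ↔ x = i := by
    intro x
    rw [sameCycle_iff_iter]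
    constructor
    · rintro ⟨t, ht⟩
      rw [(Function.IsFixedPt.iterate hfix t : (⇑σ)^[t] i = i)] at ht
      exact ht.symm
    · rintro rfl; exact ⟨0, rfl⟩
  have hlead : leaders σ i = g 0 :: (leaders τ 0).map g := by
    apply sorted_ext (leaders_pairwise σ i)
    · rw [List.pairwise_cons]
      constructor
      · rintro b hb
        obtain ⟨y, hy, rfl⟩ := List.mem_map.1 hb
        have hy0 : y ≠ 0 := by
          intro h
          exact ((mem_leaders_iff τ 0 y).1 hy).2 (h ▸ Equiv.Perm.SameCycle.refl τ 0)
        exact Fin.strictMono_succAbove i (Fin.pos_of_ne_zero hy0)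
      · exact List.pairwise_map.2 <| (leaders_pairwise τ 0).imp
          (fun h => Fin.strictMono_succAbove i h)
    · intro x
      rw [mem_leaders_iff]
      constructor
      · rintro ⟨hl, hnc⟩
        have hxne : x ≠ i := fun h => hnc ((hSC x).2 h)
        obtain ⟨y, rfl⟩ := Fin.exists_succAbove_eq hxne
        have hly : ∀ t : ℕ, y ≤ (⇑τ)^[t] y := by
          intro t
          have := hl t
          rw [hiter y t] at this
          exact Fin.succAbove_le_succAbove_iff.1 this
        by_cases h0 : y = 0
        · subst h0; exact List.mem_cons_self
        · refine List.mem_cons_of_mem _ (List.mem_map.2 ⟨y, ?_, rfl⟩)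
          rw [mem_leaders_iff]
          refine ⟨hly, fun hsc => h0 ?_⟩
          obtain ⟨t, ht⟩ := (sameCycle_iff_iter τ y 0).1 hsc.symm
          exact Fin.le_zero_iff.1 (ht ▸ hly t)
      · intro hx
        rcases List.mem_cons.1 hx with h | h
        · subst h
          refine ⟨fun t => ?_, fun hsc => Fin.succAbove_ne i 0 ((hSC _).1 hsc)⟩
          rw [hiter 0 t]
          exact Fin.succAbove_le_succAbove_iff.2 (Fin.zero_le _)
        · obtain ⟨y, hy, rfl⟩ := List.mem_map.1 h
          obtain ⟨hly, -⟩ := (mem_leaders_iff τ 0 y).1 hy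
          refine ⟨fun t => ?_, fun hsc => Fin.succAbove_ne i y ((hSC _).1 hsc)⟩
          rw [hiter y t]
          exact Fin.succAbove_le_succAbove_iff.2 (hly t)
  have hsign : Equiv.Perm.sign σ = Equiv.Perm.sign τ := by
    rw [hσ, extP_sign, Equiv.swap_self]
    simp
  rw [hsign, hcycI, hlead]
  rw [List.map_cons, List.prod_cons, hcycY 0, List.map_map]
  have : (leaders τ 0).map (cycProd A σ ∘ g) = (leaders τ 0).map (cycProd B τ) :=
    List.map_congr_left fun y _ => hcycY y
  rw [this, ← mul_assoc, (Int.cast_commute ((Equiv.Perm.sign τ : ℤ)) (A i i)).eq, mul_assoc]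

lemma caseSome (A : Matrix (Fin (n + 2)) (Fin (n + 2)) ℍ[ℝ]) (i : Fin (n + 2))
    (j' : Fin (n + 1)) (τ : Equiv.Perm (Fin (n + 1))) :
    ((Equiv.Perm.sign (extP i (some j') τ) : ℤ) : ℍ[ℝ]) *
        (cycProd A (extP i (some j') τ) i *
          ((leaders (extP i (some j') τ) i).map (cycProd A (extP i (some j') τ))).prod) =
      A i (i.succAbove j') * -(((Equiv.Perm.sign τ : ℤ) : ℍ[ℝ]) *
        (cycProd ((A.updateCol (i.succAbove j') fun l => A l i).submatrix
            i.succAbove i.succAbove) τ j' *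
          ((leaders τ j').map (cycProd ((A.updateCol (i.succAbove j') fun l => A l i).submatrix
            i.succAbove i.succAbove) τ)).prod)) := by
  set σ := extP i (some j') τ with hσ
  set g := i.succAbove with hg
  set B := (A.updateCol (i.succAbove j') fun l => A l i).submatrix i.succAbove i.succAbove
    with hB
  have hginj : Function.Injective g := Fin.succAbove_right_injective
  have hself : σ i = g j' := by
    rw [hσ, extP_apply_self, finSuccEquiv'_symm_some]
  have happ : ∀ y, τ y ≠ j' → σ (g y) = g (τ y) := by
    intro y hy
    rw [hσ, hg, extP_apply_succAbove,
      Equiv.swap_apply_of_ne_of_ne (by simp) (by simpa using hy), finSuccEquiv'_symm_some]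
  have happ' : ∀ y, τ y = j' → σ (g y) = i := by
    intro y hy
    rw [hσ, hg, extP_apply_succAbove, hy, Equiv.swap_apply_right, finSuccEquiv'_symm_none]
  set p := minimalPeriod (⇑τ) j' with hp
  have hppos : 0 < p := perm_minPos τ j'
  have hpden : ∀ s, 0 < s → s < p → (⇑τ)^[s] j' ≠ j' := by
    intro s hs hsp h
    have := iterate_injOn_Iio_minimalPeriod (f := ⇑τ) (x := j')
      (Set.mem_Iio.2 hsp) (Set.mem_Iio.2 hppos) (h.trans rfl)
    omega
  have hA : ∀ t, t < p → (⇑σ)^[t + 1] i = g ((⇑τ)^[t] j') := by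
    intro t
    induction t with
    | zero => intro _; simpa using hself
    | succ t ih =>
      intro ht
      have ht' : t < p := Nat.lt_of_succ_lt ht
      rw [Function.iterate_succ_apply', ih ht', Function.iterate_succ_apply']
      refine happ _ ?_
      have := hpden (t + 1) (Nat.succ_pos t) ht
      rwa [Function.iterate_succ_apply'] at this
  have hperP : (⇑τ)^[p] j' = j' := isPeriodicPt_minimalPeriod (⇑τ) j'
  have hper : (⇑σ)^[p + 1] i = i := by
    obtain ⟨q, hq⟩ : ∃ q, p = q + 1 := ⟨p - 1, (Nat.succ_pred_eq_of_pos hppos).symm⟩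
    rw [hq, Function.iterate_succ_apply', hA q (by omega)]
    refine happ' _ ?_
    have := hperP
    rw [hq, Function.iterate_succ_apply'] at this
    exact this
  have hne : ∀ t, 0 < t → t ≤ p → (⇑σ)^[t] i ≠ i := by
    intro t ht htp
    obtain ⟨s, rfl⟩ : ∃ s, t = s + 1 := ⟨t - 1, (Nat.succ_pred_eq_of_pos ht).symm⟩
    rw [hA s (Nat.lt_of_succ_le htp)]
    exact Fin.succAbove_ne i _
  have hc : minimalPeriod (⇑σ) i = p + 1 := by
    apply le_antisymm
    · exact IsPeriodicPt.minimalPeriod_le (Nat.succ_pos p) hper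
    · by_contra hlt
      push_neg at hlt
      exact hne _ (perm_minPos σ i) (Nat.lt_succ_iff.1 hlt)
        (isPeriodicPt_minimalPeriod (⇑σ) i)
  have hSCdescr : ∀ x, σ.SameCycle i x ↔ (x = i ∨ ∃ s, s < p ∧ g ((⇑τ)^[s] j') = x) := by
    intro x
    rw [sameCycle_iff_iter]
    constructor
    · rintro ⟨t, rfl⟩
      have hmod : (⇑σ)^[t % (p + 1)] i = (⇑σ)^[t] i := by
        rw [← hc]
        exact iterate_mod_minimalPeriod_eq
      rcases Nat.eq_zero_or_pos (t % (p + 1)) with h0 | hpos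
      · left; rw [← hmod, h0]; rfl
      · right
        obtain ⟨s, hs⟩ : ∃ s, t % (p + 1) = s + 1 :=
          ⟨t % (p + 1) - 1, (Nat.succ_pred_eq_of_pos hpos).symm⟩
        have hlt : t % (p + 1) < p + 1 := Nat.mod_lt _ (Nat.succ_pos p)
        have hsp : s < p := by omega
        refine ⟨s, hsp, ?_⟩
        rw [← hA s hsp, ← hs, hmod]
    · rintro (rfl | ⟨s, hsp, rfl⟩)
      · exact ⟨0, rfl⟩
      · exact ⟨s + 1, hA s hsp⟩
  have hSCj : ∀ y, σ.SameCycle i (g y) ↔ τ.SameCycle j' y := by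
    intro y
    rw [hSCdescr, sameCycle_iff_iter]
    constructor
    · rintro (h | ⟨s, _, hs⟩)
      · exact absurd h.symm (Fin.ne_succAbove i y)
      · exact ⟨s, hginj hs⟩
    · rintro ⟨t, rfl⟩
      right
      refine ⟨t % p, Nat.mod_lt t hppos, ?_⟩
      rw [hp, iterate_mod_minimalPeriod_eq]
  have hyt : ∀ y, ¬ τ.SameCycle j' y → ∀ t : ℕ, (⇑τ)^[t] y ≠ j' := by
    intro y hy t h
    exact hy (((sameCycle_iff_iter τ y j').2 ⟨t, h⟩).symm)
  have hiterY : ∀ y, ¬ τ.SameCycle j' y → ∀ k : ℕ, (⇑σ)^[k] (g y) = g ((⇑τ)^[k] y) := by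
    intro y hy
    apply iterate_corr
    intro t
    rw [Function.iterate_succ_apply']
    refine happ _ ?_
    have := hyt y hy (t + 1)
    rwa [Function.iterate_succ_apply'] at this
  have hBA : ∀ a b, b ≠ j' → B a b = A (g a) (g b) := by
    intro a b hb
    rw [hB, Matrix.submatrix_apply, Matrix.updateCol_ne (fun h => hb (hginj h))]
  have hBj : ∀ a, B a j' = A (g a) i := by
    intro a
    rw [hB, Matrix.submatrix_apply, Matrix.updateCol_self]
  have hcycY : ∀ y, ¬ τ.SameCycle j' y → cycProd A σ (g y) = cycProd B τ y := by
    intro y hy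
    exact cycProd_corr hginj (hiterY y hy) (fun t => (hBA _ _ (hyt y hy (t + 1))).symm)
  have hcycI : cycProd A σ i = A i (g j') * cycProd B τ j' := by
    unfold cycProd
    rw [hc, ← hp, List.range_succ_eq_map, List.map_cons, List.prod_cons, List.map_map]
    congr 1
    · simp [hself]
    · congr 1
      apply List.map_congr_left
      intro t ht
      rw [List.mem_range] at ht
      have h1 : (⇑σ)^[t + 1] i = g ((⇑τ)^[t] j') := hA t ht
      rcases Nat.lt_or_ge (t + 1) p with h2 | h2
      · have h3 : (⇑σ)^[t + 2] i = g ((⇑τ)^[t + 1] j') := hA (t + 1) h2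
        have h4 : (⇑τ)^[t + 1] j' ≠ j' := hpden (t + 1) (Nat.succ_pos t) h2
        simp only [Function.comp_apply]
        rw [h1, h3, hBA _ _ h4]
      · have h2' : t + 1 = p := le_antisymm ht h2
        have h3 : (⇑σ)^[t + 2] i = i := by
          rw [show t + 2 = p + 1 by omega]
          exact hper
        have h4 : (⇑τ)^[t + 1] j' = j' := by rw [h2']; exact hperP
        simp only [Function.comp_apply]
        rw [h1, h3, h4, hBj]
  have hlead : leaders σ i = (leaders τ j').map g := by
    apply sorted_ext (leaders_pairwise σ i)
    · exact List.pairwise_map.2 <| (leaders_pairwise τ j').imp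
        (fun h => Fin.strictMono_succAbove i h)
    · intro x
      rw [mem_leaders_iff]
      constructor
      · rintro ⟨hl, hnc⟩
        have hxne : x ≠ i := fun h => hnc (h ▸ Equiv.Perm.SameCycle.refl σ i)
        obtain ⟨y, rfl⟩ := Fin.exists_succAbove_eq hxne
        have hnsc : ¬ τ.SameCycle j' y := fun h => hnc ((hSCj y).2 h)
        refine List.mem_map.2 ⟨y, ?_, rfl⟩
        rw [mem_leaders_iff]
        refine ⟨fun t => ?_, hnsc⟩
        have := hl t
        rw [hiterY y hnsc t] at this
        exact Fin.succAbove_le_succAbove_iff.1 this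
      · intro hx
        obtain ⟨y, hy, rfl⟩ := List.mem_map.1 hx
        rw [mem_leaders_iff] at hy
        obtain ⟨hly, hnsc⟩ := hy
        refine ⟨fun t => ?_, fun hsc => hnsc ((hSCj y).1 hsc)⟩
        rw [hiterY y hnsc t]
        exact Fin.succAbove_le_succAbove_iff.2 (hly t)
  have hsign : Equiv.Perm.sign σ = -Equiv.Perm.sign τ := by
    rw [hσ, extP_sign, Equiv.Perm.sign_swap (by simp), neg_one_mul]
  have hmap : (leaders τ j').map (cycProd A σ ∘ g) = (leaders τ j').map (cycProd B τ) :=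
    List.map_congr_left fun y hy => hcycY y ((mem_leaders_iff τ j' y).1 hy).2
  rw [hsign, hcycI, hlead, List.map_map, hmap]
  simp only [Units.val_neg, Int.cast_neg, neg_mul, mul_assoc, mul_neg]
  rw [neg_inj, ← mul_assoc, (Int.cast_commute ((Equiv.Perm.sign τ : ℤ)) (A i (g j'))).eq,
    mul_assoc]

end main
/-- expansion of the `i`-th row determinant along the `i`-th row
by right cofactors.  The matrix has size `n + 2 ≥ 2`.  `R i j` is the right
`ij`-th cofactor: for `j ≠ i` (i.e. `j = i.succAbove j'`) it is minus the row
determinant, at the position of `j`, of the matrix obtained from `A` by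
replacing the `j`-th column with the `i`-th column and deleting the `i`-th row
and column; `R i i` is the row determinant of `A^{ii}` at the position of
`k = min ({1,…,n} \ {i})`, which is position `0` of the submatrix. -/
theorem stmt4 {n : ℕ} (A : Matrix (Fin (n + 2)) (Fin (n + 2)) ℍ[ℝ])
    (R : Fin (n + 2) → Fin (n + 2) → ℍ[ℝ])
    (hRdiag : ∀ i : Fin (n + 2),
      R i i = rdet (A.submatrix i.succAbove i.succAbove) 0)
    (hRoff : ∀ (i : Fin (n + 2)) (j' : Fin (n + 1)),
      R i (i.succAbove j') =
        - rdet ((A.updateCol (i.succAbove j') fun l => A l i).submatrix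
            i.succAbove i.succAbove) j') :
    ∀ i, rdet A i = ∑ j, A i j * R i j := by
  intro i
  classical
  have h1 : rdet A i = ∑ p : Option (Fin (n + 1)) × Equiv.Perm (Fin (n + 1)),
      ((Equiv.Perm.sign (extP i p.1 p.2) : ℤ) : ℍ[ℝ]) *
        (cycProd A (extP i p.1 p.2) i *
          ((leaders (extP i p.1 p.2) i).map (cycProd A (extP i p.1 p.2))).prod) := by
    rw [rdet]
    exact (Fintype.sum_equiv (Equiv.Perm.decomposeOption.symm.trans
      (Equiv.permCongr (finSuccEquiv' i).symm)) _ _ (fun p => rfl)).symm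
  rw [h1, Fintype.sum_prod_type, Fintype.sum_option, Fin.sum_univ_succAbove
    (fun j => A i j * R i j) i]
  congr 1
  · rw [hRdiag i, rdet, Finset.mul_sum]
    exact Finset.sum_congr rfl fun τ _ => caseNone A i τ
  · refine Finset.sum_congr rfl fun j' _ => ?_
    rw [hRoff i j', rdet, ← Finset.sum_neg_distrib, Finset.mul_sum]
    exact Finset.sum_congr rfl fun τ _ => caseSome A i j' τ
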